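/- Let (u,v) be a classical solution of Problem 1 (the heat–wave system) on [0,T] with initial data u₀, v₀, v₁, where v₀ is continuously differentiable. Then for every t ∈ [0,T] the coupled energy identity (1/2)∫_{−1}^{0} u(t,x)² dx + (1/2)∫_0^1 ((∂_t v(t,x))² + (∂_x v(t,x))²) dx + ∫_0^t ∫_{−1}^{0} (∂_x u(s,x))² dx ds = (1/2)∫_{−1}^{0} u₀(x)² dx + (1/2)∫_0^1 (v₁(x)² + v₀′(x)²) dx holds; in particular the boundary fluxes of the heat and wave parts cancel through the coupling conditions. -/

import Mathlib

open Set Real MeasureTheory intervalIntegral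

/-- Slice continuity in the first variable. -/
lemma sliceT {f : ℝ → ℝ → ℝ} {A B : Set ℝ}
    (hf : ContinuousOn (fun p : ℝ × ℝ => f p.1 p.2) (A ×ˢ B)) {x : ℝ} (hx : x ∈ B) :
    ContinuousOn (fun s => f s x) A :=
  hf.comp (continuous_id.prodMk continuous_const).continuousOn fun s hs => ⟨hs, hx⟩

/-- Slice continuity in the second variable. -/
lemma sliceX {f : ℝ → ℝ → ℝ} {A B : Set ℝ}
    (hf : ContinuousOn (fun p : ℝ × ℝ => f p.1 p.2) (A ×ˢ B)) {t : ℝ} (ht : t ∈ A) :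
    ContinuousOn (fun x => f t x) B :=
  hf.comp (continuous_const.prodMk continuous_id).continuousOn fun x hx => ⟨ht, hx⟩

/-- Fubini for interval integrals of a function continuous on a closed rectangle. -/
lemma fubini_swap (a b c d : ℝ) (hab : a ≤ b) (hcd : c ≤ d) (f : ℝ → ℝ → ℝ)
    (hf : ContinuousOn (fun p : ℝ × ℝ => f p.1 p.2) (Icc a b ×ˢ Icc c d)) :
    (∫ x in a..b, ∫ y in c..d, f x y) = ∫ y in c..d, ∫ x in a..b, f x y := by
  rw [intervalIntegral.integral_of_le hab, intervalIntegral.integral_of_le hcd]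
  simp_rw [intervalIntegral.integral_of_le hab, intervalIntegral.integral_of_le hcd]
  apply MeasureTheory.integral_integral_swap
  rw [Measure.prod_restrict]
  have h1 : IntegrableOn (Function.uncurry f) (Icc a b ×ˢ Icc c d)
      ((volume : Measure ℝ).prod volume) := by
    rw [← Measure.volume_eq_prod]
    exact hf.integrableOn_compact (isCompact_Icc.prod isCompact_Icc)
  exact h1.mono_set (prod_mono Ioc_subset_Icc_self Ioc_subset_Icc_self)

/-- Interval integrability of a parametric interval integral of a function
continuous on a closed rectangle. -/
lemma integrable_param {a b c d : ℝ} (hab : a ≤ b) (hcd : c ≤ d) {f : ℝ → ℝ → ℝ}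
    (hf : ContinuousOn (fun p : ℝ × ℝ => f p.1 p.2) (Icc a b ×ˢ Icc c d)) :
    IntervalIntegrable (fun s => ∫ x in c..d, f s x) volume a b := by
  set g : ℝ → ℝ → ℝ := fun s x => f (projIcc a b hab s) (projIcc c d hcd x) with hg
  have hgc : Continuous (Function.uncurry g) := by
    have hmap : Continuous (fun p : ℝ × ℝ =>
        (((projIcc a b hab p.1 : ℝ)), ((projIcc c d hcd p.2 : ℝ)))) := by
      apply Continuous.prodMk
      · exact continuous_subtype_val.comp (continuous_projIcc.comp continuous_fst)
      · exact continuous_subtype_val.comp (continuous_projIcc.comp continuous_snd)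
    exact hf.comp_continuous hmap (fun p => ⟨(projIcc a b hab p.1).2, (projIcc c d hcd p.2).2⟩)
  have hcont : Continuous fun s => ∫ x in c..d, g s x :=
    intervalIntegral.continuous_parametric_intervalIntegral_of_continuous' hgc c d
  apply ContinuousOn.intervalIntegrable_of_Icc hab
  apply hcont.continuousOn.congr
  intro s hs
  refine intervalIntegral.integral_congr fun x hx => ?_
  rw [uIcc_of_le hcd] at hx
  simp only [g, projIcc_of_mem hab hs, projIcc_of_mem hcd hx]

/-- A classical solution of the heat equation `∂_t u = ∂_x² u` on `[0,T] × [−1,0]`: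
`u` is continuous on the closed rectangle, the partial derivatives `ut = ∂_t u`,
`ux = ∂_x u`, `uxx = ∂_x² u` exist and are continuous there, and `∂_t u = ∂_x² u`. -/
structure IsHeatSol (T : ℝ) (u ut ux uxx : ℝ → ℝ → ℝ) : Prop where
  contu : ContinuousOn (fun p : ℝ × ℝ => u p.1 p.2) (Icc 0 T ×ˢ Icc (-1) 0)
  hut : ∀ t ∈ Icc (0:ℝ) T, ∀ x ∈ Icc (-1:ℝ) 0, HasDerivAt (fun τ => u τ x) (ut t x) t
  hux : ∀ t ∈ Icc (0:ℝ) T, ∀ x ∈ Icc (-1:ℝ) 0, HasDerivAt (fun y => u t y) (ux t x) x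
  huxx : ∀ t ∈ Icc (0:ℝ) T, ∀ x ∈ Icc (-1:ℝ) 0, HasDerivAt (fun y => ux t y) (uxx t x) x
  contut : ContinuousOn (fun p : ℝ × ℝ => ut p.1 p.2) (Icc 0 T ×ˢ Icc (-1) 0)
  contux : ContinuousOn (fun p : ℝ × ℝ => ux p.1 p.2) (Icc 0 T ×ˢ Icc (-1) 0)
  contuxx : ContinuousOn (fun p : ℝ × ℝ => uxx p.1 p.2) (Icc 0 T ×ˢ Icc (-1) 0)
  heat : ∀ t ∈ Icc (0:ℝ) T, ∀ x ∈ Icc (-1:ℝ) 0, ut t x = uxx t x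

/-- A classical solution of the wave equation `∂_t² v = ∂_x² v` on `[0,T] × [0,1]`:
`v` is twice continuously differentiable up to the boundary, with first partial
derivatives `vt`, `vx`, second partial derivatives `vtt`, `vxx` and mixed partial
derivative `vtx`, all continuous on the closed rectangle. -/
structure IsWaveSol (T : ℝ) (v vt vx vtt vtx vxx : ℝ → ℝ → ℝ) : Prop where
  contv : ContinuousOn (fun p : ℝ × ℝ => v p.1 p.2) (Icc 0 T ×ˢ Icc 0 1)
  hvt : ∀ t ∈ Icc (0:ℝ) T, ∀ x ∈ Icc (0:ℝ) 1, HasDerivAt (fun τ => v τ x) (vt t x) t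
  hvx : ∀ t ∈ Icc (0:ℝ) T, ∀ x ∈ Icc (0:ℝ) 1, HasDerivAt (fun y => v t y) (vx t x) x
  hvtt : ∀ t ∈ Icc (0:ℝ) T, ∀ x ∈ Icc (0:ℝ) 1, HasDerivAt (fun τ => vt τ x) (vtt t x) t
  hvtx : ∀ t ∈ Icc (0:ℝ) T, ∀ x ∈ Icc (0:ℝ) 1, HasDerivAt (fun y => vt t y) (vtx t x) x
  hvxt : ∀ t ∈ Icc (0:ℝ) T, ∀ x ∈ Icc (0:ℝ) 1, HasDerivAt (fun τ => vx τ x) (vtx t x) t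
  hvxx : ∀ t ∈ Icc (0:ℝ) T, ∀ x ∈ Icc (0:ℝ) 1, HasDerivAt (fun y => vx t y) (vxx t x) x
  contvt : ContinuousOn (fun p : ℝ × ℝ => vt p.1 p.2) (Icc 0 T ×ˢ Icc 0 1)
  contvx : ContinuousOn (fun p : ℝ × ℝ => vx p.1 p.2) (Icc 0 T ×ˢ Icc 0 1)
  contvtt : ContinuousOn (fun p : ℝ × ℝ => vtt p.1 p.2) (Icc 0 T ×ˢ Icc 0 1)
  contvtx : ContinuousOn (fun p : ℝ × ℝ => vtx p.1 p.2) (Icc 0 T ×ˢ Icc 0 1)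
  contvxx : ContinuousOn (fun p : ℝ × ℝ => vxx p.1 p.2) (Icc 0 T ×ˢ Icc 0 1)
  wave : ∀ t ∈ Icc (0:ℝ) T, ∀ x ∈ Icc (0:ℝ) 1, vtt t x = vxx t x

/-- Problem 1 (the heat–wave system) on `[0,T]` with initial data `u₀, v₀, v₁`:
the heat equation on `[0,T] × [−1,0]` and the wave equation on `[0,T] × [0,1]`,
coupled at the interface `x = 0` by `u(t,0) = ∂_t v(t,0)` (kinematic condition) and
`∂_x u(t,0) = ∂_x v(t,0)` (dynamic condition), with homogeneous boundary conditions
`u(t,−1) = v(t,1) = 0`. -/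
structure Problem1 (T : ℝ) (u ut ux uxx v vt vx vtt vtx vxx : ℝ → ℝ → ℝ)
    (u₀ v₀ v₁ : ℝ → ℝ) : Prop where
  heatSol : IsHeatSol T u ut ux uxx
  waveSol : IsWaveSol T v vt vx vtt vtx vxx
  kinematic : ∀ t ∈ Icc (0:ℝ) T, u t 0 = vt t 0
  dynamic : ∀ t ∈ Icc (0:ℝ) T, ux t 0 = vx t 0
  bdryu : ∀ t ∈ Icc (0:ℝ) T, u t (-1) = 0
  bdryv : ∀ t ∈ Icc (0:ℝ) T, v t 1 = 0
  initu : ∀ x ∈ Icc (-1:ℝ) 0, u 0 x = u₀ x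
  initv : ∀ x ∈ Icc (0:ℝ) 1, v 0 x = v₀ x
  initvt : ∀ x ∈ Icc (0:ℝ) 1, vt 0 x = v₁ x

/-- Coupled energy identity for a classical solution `(u,v)` of
Problem 1 (the heat–wave system) on `[0,T]` with initial data `u₀, v₀, v₁`, `v₀`
continuously differentiable with derivative `v₀'`:
`(1/2)∫_{−1}^0 u(t)² + (1/2)∫_0^1 ((∂_t v(t))² + (∂_x v(t))²) + ∫_0^t ∫_{−1}^0 (∂_x u)²
 = (1/2)∫_{−1}^0 u₀² + (1/2)∫_0^1 (v₁² + v₀'²)`. -/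
theorem problem1_energy_identity (T : ℝ) (hT : 0 ≤ T)
    (u ut ux uxx v vt vx vtt vtx vxx : ℝ → ℝ → ℝ) (u₀ v₀ v₀' v₁ : ℝ → ℝ)
    (hP : Problem1 T u ut ux uxx v vt vx vtt vtx vxx u₀ v₀ v₁)
    (hv₀d : ∀ x ∈ Icc (0:ℝ) 1, HasDerivAt v₀ (v₀' x) x)
    (hv₀c : ContinuousOn v₀' (Icc 0 1)) :
    ∀ t ∈ Icc (0:ℝ) T,
      (1 / 2) * (∫ x in (-1:ℝ)..0, (u t x) ^ 2)
        + (1 / 2) * (∫ x in (0:ℝ)..1, ((vt t x) ^ 2 + (vx t x) ^ 2))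
        + (∫ s in (0:ℝ)..t, ∫ x in (-1:ℝ)..0, (ux s x) ^ 2)
      = (1 / 2) * (∫ x in (-1:ℝ)..0, (u₀ x) ^ 2)
        + (1 / 2) * (∫ x in (0:ℝ)..1, ((v₁ x) ^ 2 + (v₀' x) ^ 2)) := by
  intro t ht
  obtain ⟨ht0, htT⟩ := ht
  have h0T : (0:ℝ) ∈ Icc 0 T := ⟨le_rfl, hT⟩
  have hm0 : (0:ℝ) ∈ Icc (-1:ℝ) 0 := by norm_num
  have hm1 : (-1:ℝ) ∈ Icc (-1:ℝ) 0 := by norm_num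
  have hw0 : (0:ℝ) ∈ Icc (0:ℝ) 1 := by norm_num
  have hw1 : (1:ℝ) ∈ Icc (0:ℝ) 1 := by norm_num
  have hn10 : (-1:ℝ) ≤ 0 := by norm_num
  have h01 : (0:ℝ) ≤ 1 := by norm_num
  have hsub : Icc (0:ℝ) t ⊆ Icc 0 T := Icc_subset_Icc le_rfl htT
  -- vx 0 x = v₀' x
  have hvx0 : ∀ x ∈ Icc (0:ℝ) 1, vx 0 x = v₀' x := by
    intro x hx
    have h1 : HasDerivWithinAt v₀ (vx 0 x) (Icc 0 1) x :=
      ((hP.waveSol.hvx 0 h0T x hx).hasDerivWithinAt).congr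
        (fun y hy => (hP.initv y hy).symm) (hP.initv x hx).symm
    have h2 : HasDerivWithinAt v₀ (v₀' x) (Icc 0 1) x := (hv₀d x hx).hasDerivWithinAt
    have hu := (uniqueDiffOn_Icc one_pos) x hx
    exact (h1.derivWithin hu).symm.trans (h2.derivWithin hu)
  -- initial-data rewrites
  have hA0 : (∫ x in (-1:ℝ)..0, (u 0 x) ^ 2) = ∫ x in (-1:ℝ)..0, (u₀ x) ^ 2 := by
    refine intervalIntegral.integral_congr fun x hx => ?_
    rw [uIcc_of_le hn10] at hx
    rw [hP.initu x hx]
  have hB0 : (∫ x in (0:ℝ)..1, ((vt 0 x) ^ 2 + (vx 0 x) ^ 2))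
      = ∫ x in (0:ℝ)..1, ((v₁ x) ^ 2 + (v₀' x) ^ 2) := by
    refine intervalIntegral.integral_congr fun x hx => ?_
    rw [uIcc_of_le h01] at hx
    rw [hP.initvt x hx, hvx0 x hx]
  rcases eq_or_lt_of_le ht0 with h0t | h0t
  · -- t = 0
    subst h0t
    rw [intervalIntegral.integral_same, hA0, hB0]
    ring
  -- now 0 < t, hence 0 < T
  have hT0 : (0:ℝ) < T := lt_of_lt_of_le h0t htT
  have hsubU : uIcc (0:ℝ) t ⊆ Icc 0 T := by rw [uIcc_of_le ht0]; exact hsub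
  -- vt s 1 = 0
  have hvt1 : ∀ s ∈ Icc (0:ℝ) T, vt s 1 = 0 := by
    intro s hs
    have h1 : HasDerivWithinAt (fun τ => v τ 1) (vt s 1) (Icc 0 T) s :=
      (hP.waveSol.hvt s hs 1 hw1).hasDerivWithinAt
    have h2 : HasDerivWithinAt (fun τ => v τ 1) 0 (Icc 0 T) s :=
      (hasDerivWithinAt_const s (Icc 0 T) (0:ℝ)).congr
        (fun τ hτ => hP.bdryv τ hτ) (hP.bdryv s hs)
    have hu := (uniqueDiffOn_Icc hT0) s hs
    exact (h1.derivWithin hu).symm.trans (h2.derivWithin hu)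
  -- pointwise FTC in time, heat part
  have hptA : ∀ x ∈ Icc (-1:ℝ) 0,
      (1/2) * (u t x) ^ 2 - (1/2) * (u 0 x) ^ 2 = ∫ s in (0:ℝ)..t, u s x * ut s x := by
    intro x hx
    have hd : ∀ s ∈ uIcc (0:ℝ) t,
        HasDerivAt (fun τ => (1/2) * (u τ x) ^ 2) (u s x * ut s x) s := by
      intro s hs
      have : HasDerivAt (fun τ => (1/2) * (u τ x) ^ 2) _ s :=
        ((hP.heatSol.hut s (hsubU hs) x hx).pow 2).const_mul (1/2 : ℝ)
      convert this using 1
      ring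
    have hi : IntervalIntegrable (fun s => u s x * ut s x) volume 0 t :=
      ContinuousOn.intervalIntegrable_of_Icc ht0
        (((sliceT hP.heatSol.contu hx).mul (sliceT hP.heatSol.contut hx)).mono hsub)
    simpa using (intervalIntegral.integral_eq_sub_of_hasDerivAt hd hi).symm
  -- pointwise FTC in time, wave part
  have hptB : ∀ x ∈ Icc (0:ℝ) 1,
      (1/2) * ((vt t x) ^ 2 + (vx t x) ^ 2) - (1/2) * ((vt 0 x) ^ 2 + (vx 0 x) ^ 2)
        = ∫ s in (0:ℝ)..t, (vt s x * vtt s x + vx s x * vtx s x) := by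
    intro x hx
    have hd : ∀ s ∈ uIcc (0:ℝ) t,
        HasDerivAt (fun τ => (1/2) * ((vt τ x) ^ 2 + (vx τ x) ^ 2))
          (vt s x * vtt s x + vx s x * vtx s x) s := by
      intro s hs
      have : HasDerivAt (fun τ => (1/2) * ((vt τ x) ^ 2 + (vx τ x) ^ 2)) _ s :=
        (((hP.waveSol.hvtt s (hsubU hs) x hx).pow 2).add
        ((hP.waveSol.hvxt s (hsubU hs) x hx).pow 2)).const_mul (1/2 : ℝ)
      convert this using 1
      ring
    have hi : IntervalIntegrable (fun s => vt s x * vtt s x + vx s x * vtx s x) volume 0 t :=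
      ContinuousOn.intervalIntegrable_of_Icc ht0
        ((((sliceT hP.waveSol.contvt hx).mul (sliceT hP.waveSol.contvtt hx)).add
          ((sliceT hP.waveSol.contvx hx).mul (sliceT hP.waveSol.contvtx hx))).mono hsub)
    simpa using (intervalIntegral.integral_eq_sub_of_hasDerivAt hd hi).symm
  -- integrate in x and swap, heat part
  have keyA : (1/2) * (∫ x in (-1:ℝ)..0, (u t x) ^ 2)
      - (1/2) * (∫ x in (-1:ℝ)..0, (u 0 x) ^ 2)
      = ∫ s in (0:ℝ)..t, ∫ x in (-1:ℝ)..0, u s x * ut s x := by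
    have h1 : (∫ x in (-1:ℝ)..0, ((1/2) * (u t x) ^ 2 - (1/2) * (u 0 x) ^ 2))
        = ∫ x in (-1:ℝ)..0, ∫ s in (0:ℝ)..t, u s x * ut s x := by
      refine intervalIntegral.integral_congr fun x hx => ?_
      rw [uIcc_of_le hn10] at hx
      exact hptA x hx
    have h2 := fubini_swap (-1) 0 0 t hn10 ht0 (fun x s => u s x * ut s x)
      ((hP.heatSol.contu.mul hP.heatSol.contut).comp continuous_swap.continuousOn
        (fun p hp => ⟨hsub hp.2, hp.1⟩))
    rw [h2] at h1
    rw [← h1]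
    have hi1 : IntervalIntegrable (fun x => (1/2) * (u t x) ^ 2) volume (-1) 0 :=
      ContinuousOn.intervalIntegrable_of_Icc hn10
        (continuousOn_const.mul ((sliceX hP.heatSol.contu ⟨ht0, htT⟩).pow 2))
    have hi2 : IntervalIntegrable (fun x => (1/2) * (u 0 x) ^ 2) volume (-1) 0 :=
      ContinuousOn.intervalIntegrable_of_Icc hn10
        (continuousOn_const.mul ((sliceX hP.heatSol.contu h0T).pow 2))
    rw [intervalIntegral.integral_sub hi1 hi2, intervalIntegral.integral_const_mul,
      intervalIntegral.integral_const_mul]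
  -- integrate in x and swap, wave part
  have keyB : (1/2) * (∫ x in (0:ℝ)..1, ((vt t x) ^ 2 + (vx t x) ^ 2))
      - (1/2) * (∫ x in (0:ℝ)..1, ((vt 0 x) ^ 2 + (vx 0 x) ^ 2))
      = ∫ s in (0:ℝ)..t, ∫ x in (0:ℝ)..1, (vt s x * vtt s x + vx s x * vtx s x) := by
    have h1 : (∫ x in (0:ℝ)..1, ((1/2) * ((vt t x) ^ 2 + (vx t x) ^ 2)
          - (1/2) * ((vt 0 x) ^ 2 + (vx 0 x) ^ 2)))
        = ∫ x in (0:ℝ)..1, ∫ s in (0:ℝ)..t, (vt s x * vtt s x + vx s x * vtx s x) := by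
      refine intervalIntegral.integral_congr fun x hx => ?_
      rw [uIcc_of_le h01] at hx
      exact hptB x hx
    have h2 := fubini_swap 0 1 0 t h01 ht0
      (fun x s => vt s x * vtt s x + vx s x * vtx s x)
      (((hP.waveSol.contvt.mul hP.waveSol.contvtt).add
        (hP.waveSol.contvx.mul hP.waveSol.contvtx)).comp continuous_swap.continuousOn
        (fun p hp => ⟨hsub hp.2, hp.1⟩))
    rw [h2] at h1
    rw [← h1]
    have hi1 : IntervalIntegrable (fun x => (1/2) * ((vt t x) ^ 2 + (vx t x) ^ 2)) volume 0 1 :=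
      ContinuousOn.intervalIntegrable_of_Icc h01
        (continuousOn_const.mul (((sliceX hP.waveSol.contvt ⟨ht0, htT⟩).pow 2).add
          ((sliceX hP.waveSol.contvx ⟨ht0, htT⟩).pow 2)))
    have hi2 : IntervalIntegrable (fun x => (1/2) * ((vt 0 x) ^ 2 + (vx 0 x) ^ 2)) volume 0 1 :=
      ContinuousOn.intervalIntegrable_of_Icc h01
        (continuousOn_const.mul (((sliceX hP.waveSol.contvt h0T).pow 2).add
          ((sliceX hP.waveSol.contvx h0T).pow 2)))
    rw [intervalIntegral.integral_sub hi1 hi2, intervalIntegral.integral_const_mul,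
      intervalIntegral.integral_const_mul]
  -- integration by parts in space, heat part
  have hG1 : ∀ s ∈ Icc (0:ℝ) T, (∫ x in (-1:ℝ)..0, u s x * ut s x)
      = u s 0 * ux s 0 - ∫ x in (-1:ℝ)..0, (ux s x) ^ 2 := by
    intro s hs
    have hibp : (∫ x in (-1:ℝ)..0, ((ux s x) ^ 2 + u s x * uxx s x))
        = u s 0 * ux s 0 - u s (-1) * ux s (-1) := by
      have hd : ∀ x ∈ uIcc (-1:ℝ) 0, HasDerivAt (fun y => u s y * ux s y)
          ((ux s x) ^ 2 + u s x * uxx s x) x := by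
        intro x hx
        rw [uIcc_of_le hn10] at hx
        have : HasDerivAt (fun y => u s y * ux s y) _ x :=
          (hP.heatSol.hux s hs x hx).mul (hP.heatSol.huxx s hs x hx)
        convert this using 1
        ring
      refine (intervalIntegral.integral_eq_sub_of_hasDerivAt hd ?_)
      exact ContinuousOn.intervalIntegrable_of_Icc hn10
          (((sliceX hP.heatSol.contux hs).pow 2).add
            ((sliceX hP.heatSol.contu hs).mul (sliceX hP.heatSol.contuxx hs)))
    have hcong : (∫ x in (-1:ℝ)..0, u s x * ut s x)
        = ∫ x in (-1:ℝ)..0, (((ux s x) ^ 2 + u s x * uxx s x) - (ux s x) ^ 2) := by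
      refine intervalIntegral.integral_congr fun x hx => ?_
      rw [uIcc_of_le hn10] at hx
      rw [hP.heatSol.heat s hs x hx]
      ring
    have hi1 : IntervalIntegrable (fun x => (ux s x) ^ 2 + u s x * uxx s x) volume (-1) 0 :=
      ContinuousOn.intervalIntegrable_of_Icc hn10
        (((sliceX hP.heatSol.contux hs).pow 2).add
          ((sliceX hP.heatSol.contu hs).mul (sliceX hP.heatSol.contuxx hs)))
    have hi2 : IntervalIntegrable (fun x => (ux s x) ^ 2) volume (-1) 0 :=
      ContinuousOn.intervalIntegrable_of_Icc hn10 ((sliceX hP.heatSol.contux hs).pow 2)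
    rw [hcong, intervalIntegral.integral_sub hi1 hi2, hibp, hP.bdryu s hs]
    ring
  -- FTC in space, wave part
  have hG2 : ∀ s ∈ Icc (0:ℝ) T, (∫ x in (0:ℝ)..1, (vt s x * vtt s x + vx s x * vtx s x))
      = -(u s 0 * ux s 0) := by
    intro s hs
    have hftc : (∫ x in (0:ℝ)..1, (vtx s x * vx s x + vt s x * vxx s x))
        = vt s 1 * vx s 1 - vt s 0 * vx s 0 := by
      have hd : ∀ x ∈ uIcc (0:ℝ) 1, HasDerivAt (fun y => vt s y * vx s y)
          (vtx s x * vx s x + vt s x * vxx s x) x := by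
        intro x hx
        rw [uIcc_of_le h01] at hx
        exact (hP.waveSol.hvtx s hs x hx).mul (hP.waveSol.hvxx s hs x hx)
      refine (intervalIntegral.integral_eq_sub_of_hasDerivAt hd ?_)
      exact ContinuousOn.intervalIntegrable_of_Icc h01
          (((sliceX hP.waveSol.contvtx hs).mul (sliceX hP.waveSol.contvx hs)).add
            ((sliceX hP.waveSol.contvt hs).mul (sliceX hP.waveSol.contvxx hs)))
    have hcong : (∫ x in (0:ℝ)..1, (vt s x * vtt s x + vx s x * vtx s x))
        = ∫ x in (0:ℝ)..1, (vtx s x * vx s x + vt s x * vxx s x) := by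
      refine intervalIntegral.integral_congr fun x hx => ?_
      rw [uIcc_of_le h01] at hx
      rw [hP.waveSol.wave s hs x hx]
      ring
    rw [hcong, hftc, hvt1 s hs, hP.kinematic s hs, hP.dynamic s hs]
    ring
  -- combine the two boundary contributions
  have hiG1 : IntervalIntegrable (fun s => ∫ x in (-1:ℝ)..0, u s x * ut s x) volume 0 t :=
    integrable_param ht0 hn10
      ((hP.heatSol.contu.mul hP.heatSol.contut).mono
        (prod_mono hsub (Subset.refl _)))
  have hiG2 : IntervalIntegrable
      (fun s => ∫ x in (0:ℝ)..1, (vt s x * vtt s x + vx s x * vtx s x)) volume 0 t :=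
    integrable_param ht0 h01
      (((hP.waveSol.contvt.mul hP.waveSol.contvtt).add
        (hP.waveSol.contvx.mul hP.waveSol.contvtx)).mono
        (prod_mono hsub (Subset.refl _)))
  have hsum : (∫ s in (0:ℝ)..t, ∫ x in (-1:ℝ)..0, u s x * ut s x)
      + (∫ s in (0:ℝ)..t, ∫ x in (0:ℝ)..1, (vt s x * vtt s x + vx s x * vtx s x))
      = -∫ s in (0:ℝ)..t, ∫ x in (-1:ℝ)..0, (ux s x) ^ 2 := by
    rw [← intervalIntegral.integral_add hiG1 hiG2, ← intervalIntegral.integral_neg]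
    refine intervalIntegral.integral_congr fun s hs => ?_
    rw [uIcc_of_le ht0] at hs
    have hs' := hsub hs
    simp only [hG1 s hs', hG2 s hs']
    ring
  linarith [keyA, keyB, hsum, hA0, hB0]
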